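/- Let Q be an n×n real positive semidefinite symmetric matrix and R an m×m real positive definite symmetric matrix. Then the function f(X,Y) = trace(Q·X + X⁻¹·Yᵀ·R·Y) is convex on the convex set {(X,Y) : X is an n×n symmetric positive definite matrix, Y ∈ ℝ^{m×n}} (jointly in (X,Y)). -/

import Mathlib

open Matrix

private lemma psd_trace_nonneg {k : ℕ} {M : Matrix (Fin k) (Fin k) ℝ}
    (hM : M.PosSemidef) : 0 ≤ M.trace := by
  have h : ∀ i, 0 ≤ M i i := fun i => by simpa using hM.dotProduct_mulVec_nonneg (Pi.single i 1)
  exact Finset.sum_nonneg fun i _ => h i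

open scoped MatrixOrder in
private lemma psd_trace_mul_nonneg {k : ℕ} {A B : Matrix (Fin k) (Fin k) ℝ}
    (hA : A.PosSemidef) (hB : B.PosSemidef) : 0 ≤ (A * B).trace := by
  have hS : CFC.sqrt A * CFC.sqrt A = A := CFC.sqrt_mul_sqrt_self A hA.nonneg
  have h3 : (CFC.sqrt A * B * CFC.sqrt A).trace = (A * B).trace := by
    rw [trace_mul_comm, ← Matrix.mul_assoc, hS]
  have h2 := hB.conjTranspose_mul_mul_same (CFC.sqrt A)
  rw [(CFC.sqrt_nonneg A).posSemidef.isHermitian.eq] at h2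
  rw [← h3]
  exact psd_trace_nonneg h2

private lemma transpose_of_posDef {k : ℕ} {X : Matrix (Fin k) (Fin k) ℝ}
    (hX : X.PosDef) : Xᵀ = X := by
  simpa using hX.isHermitian.eq

private lemma psd_transpose_mul_mul {k l : ℕ} {A : Matrix (Fin k) (Fin k) ℝ}
    (hA : A.PosSemidef) (B : Matrix (Fin k) (Fin l) ℝ) : (Bᵀ * A * B).PosSemidef := by
  have := hA.conjTranspose_mul_mul_same B
  simpa using this

/-- Key inequality: `2 tr(Zᵀ R Y) - tr(X (Zᵀ R Z)) ≤ tr(X⁻¹ Yᵀ R Y)`. -/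
private lemma key_ineq {n m : ℕ} {R : Matrix (Fin m) (Fin m) ℝ} (hR : R.PosDef)
    {X : Matrix (Fin n) (Fin n) ℝ} (hX : X.PosDef)
    (Y Z : Matrix (Fin m) (Fin n) ℝ) :
    2 * (Zᵀ * R * Y).trace - (X * (Zᵀ * R * Z)).trace ≤ (X⁻¹ * Yᵀ * R * Y).trace := by
  have hd : IsUnit X.det := hX.det_pos.ne'.isUnit
  have hXX : X * X⁻¹ = 1 := mul_nonsing_inv X hd
  have hXiX : X⁻¹ * X = 1 := nonsing_inv_mul X hd
  have hXt : Xᵀ = X := transpose_of_posDef hX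
  have hXit : (X⁻¹)ᵀ = X⁻¹ := by rw [transpose_nonsing_inv, hXt]
  have collapse : ∀ M : Matrix (Fin n) (Fin n) ℝ, X * (X⁻¹ * M) = M := fun M => by
    rw [← Matrix.mul_assoc, hXX, Matrix.one_mul]
  set W := Y * X⁻¹ - Z with hWdef
  have hWpsd : (Wᵀ * R * W).PosSemidef := psd_transpose_mul_mul hR.posSemidef W
  have hnn : 0 ≤ (X * (Wᵀ * R * W)).trace := psd_trace_mul_nonneg hX.posSemidef hWpsd
  have hWt : Wᵀ = X⁻¹ * Yᵀ - Zᵀ := by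
    rw [hWdef, transpose_sub, transpose_mul, hXit]
  have e1 : Wᵀ * R * W
      = X⁻¹ * (Yᵀ * (R * (Y * X⁻¹))) - X⁻¹ * (Yᵀ * (R * Z))
        - Zᵀ * (R * (Y * X⁻¹)) + Zᵀ * (R * Z) := by
    rw [hWt, hWdef]
    simp only [Matrix.sub_mul, Matrix.mul_sub, Matrix.mul_assoc]
    abel
  have hexp : (X * (Wᵀ * R * W)).trace
      = (X * (X⁻¹ * (Yᵀ * (R * (Y * X⁻¹))))).trace
        - (X * (X⁻¹ * (Yᵀ * (R * Z)))).trace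
        - (X * (Zᵀ * (R * (Y * X⁻¹)))).trace
        + (X * (Zᵀ * (R * Z))).trace := by
    rw [e1, Matrix.mul_add, Matrix.mul_sub, Matrix.mul_sub, trace_add, trace_sub, trace_sub]
  have tA : (X * (X⁻¹ * (Yᵀ * (R * (Y * X⁻¹))))).trace = (X⁻¹ * Yᵀ * R * Y).trace := by
    rw [collapse, show Yᵀ * (R * (Y * X⁻¹)) = (Yᵀ * (R * Y)) * X⁻¹ from by
      simp only [Matrix.mul_assoc], trace_mul_comm]
    simp only [← Matrix.mul_assoc]
  have tB : (X * (X⁻¹ * (Yᵀ * (R * Z)))).trace = (Zᵀ * R * Y).trace := by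
    rw [collapse, ← trace_transpose, transpose_mul, transpose_mul, transpose_transpose,
      transpose_of_posDef hR]
  have tC : (X * (Zᵀ * (R * (Y * X⁻¹)))).trace = (Zᵀ * R * Y).trace := by
    rw [show X * (Zᵀ * (R * (Y * X⁻¹))) = (X * (Zᵀ * (R * Y))) * X⁻¹ from by
      simp only [Matrix.mul_assoc], trace_mul_comm, ← Matrix.mul_assoc, hXiX, one_mul, ← Matrix.mul_assoc]
  have tD : (X * (Zᵀ * (R * Z))).trace = (X * (Zᵀ * R * Z)).trace := by
    simp only [Matrix.mul_assoc]
  rw [hexp, tA, tB, tC, tD] at hnn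
  linarith

private lemma posDef_comb {k : ℕ} {A B : Matrix (Fin k) (Fin k) ℝ}
    (hA : A.PosDef) (hB : B.PosDef) {a b : ℝ}
    (ha : 0 ≤ a) (hb : 0 ≤ b) (hab : a + b = 1) : (a • A + b • B).PosDef := by
  refine PosDef.of_dotProduct_mulVec_pos ?_ ?_
  · show (a • A + b • B)ᴴ = _
    rw [conjTranspose_add, conjTranspose_smul, conjTranspose_smul,
      hA.isHermitian.eq, hB.isHermitian.eq]
    simp
  · intro x hx
    have qA : 0 < star x ⬝ᵥ A *ᵥ x := hA.dotProduct_mulVec_pos hx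
    have qB : 0 < star x ⬝ᵥ B *ᵥ x := hB.dotProduct_mulVec_pos hx
    have hq : star x ⬝ᵥ (a • A + b • B) *ᵥ x
        = a * (star x ⬝ᵥ A *ᵥ x) + b * (star x ⬝ᵥ B *ᵥ x) := by
      simp [Matrix.add_mulVec, smul_mulVec, dotProduct_add, dotProduct_smul, smul_eq_mul]
    rw [hq]
    rcases lt_or_ge 0 a with ha' | ha'
    · exact add_pos_of_pos_of_nonneg (mul_pos ha' qA) (mul_nonneg hb qB.le)
    · have haz : a = 0 := le_antisymm ha' ha
      have hbz : b = 1 := by linarith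
      simpa [haz, hbz] using qB

private lemma sup_form {n m : ℕ} {R : Matrix (Fin m) (Fin m) ℝ}
    {X : Matrix (Fin n) (Fin n) ℝ} (hX : X.PosDef) (Y : Matrix (Fin m) (Fin n) ℝ) :
    (X⁻¹ * Yᵀ * R * Y).trace
      = 2 * ((Y * X⁻¹)ᵀ * R * Y).trace - (X * ((Y * X⁻¹)ᵀ * R * (Y * X⁻¹))).trace := by
  have hd : IsUnit X.det := hX.det_pos.ne'.isUnit
  have hXX : X * X⁻¹ = 1 := mul_nonsing_inv X hd
  have hXt : Xᵀ = X := transpose_of_posDef hX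
  have hXit : (X⁻¹)ᵀ = X⁻¹ := by rw [transpose_nonsing_inv, hXt]
  have hZt : (Y * X⁻¹)ᵀ = X⁻¹ * Yᵀ := by rw [transpose_mul, hXit]
  rw [hZt]
  have c1 : (X * (X⁻¹ * Yᵀ * R * (Y * X⁻¹))).trace = (X⁻¹ * Yᵀ * R * Y).trace := by
    rw [show X * (X⁻¹ * Yᵀ * R * (Y * X⁻¹)) = (X * X⁻¹) * (Yᵀ * (R * Y) * X⁻¹) from by
      simp only [Matrix.mul_assoc], hXX, one_mul, trace_mul_comm]
    simp only [← Matrix.mul_assoc]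
  rw [c1]
  ring

/-- **Convexity of the matrix fractional function in LQR** (Appendix C.1):
for `Q ⪰ 0` and `R ≻ 0`, the function
`f(X,Y) = trace(Q·X + X⁻¹·Yᵀ·R·Y)` is jointly convex on the convex set
`{(X,Y) : X symmetric positive definite}`. -/
theorem matrixFractional_convexOn {n m : ℕ}
    {Q : Matrix (Fin n) (Fin n) ℝ} {R : Matrix (Fin m) (Fin m) ℝ}
    (hQ : Q.PosSemidef) (hR : R.PosDef) :
    ConvexOn ℝ
      {p : Matrix (Fin n) (Fin n) ℝ × Matrix (Fin m) (Fin n) ℝ | p.1.PosDef}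
      (fun p => (Q * p.1 + p.1⁻¹ * p.2ᵀ * R * p.2).trace) := by
  constructor
  · intro p hp q hq a b ha hb hab
    exact posDef_comb hp hq ha hb hab
  · rintro ⟨X₁, Y₁⟩ hp ⟨X₂, Y₂⟩ hq a b ha hb hab
    simp only [Set.mem_setOf_eq] at hp hq
    simp only [Prod.smul_fst, Prod.smul_snd, Prod.fst_add, Prod.snd_add, Prod.smul_mk,
      Prod.mk_add_mk, smul_eq_mul]
    set Xt := a • X₁ + b • X₂ with hXtdef
    set Yt := a • Y₁ + b • Y₂ with hYtdef
    have hXtpd : Xt.PosDef := posDef_comb hp hq ha hb hab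
    set Z : Matrix (Fin m) (Fin n) ℝ := Yt * Xt⁻¹ with hZdef
    have hsup : (Xt⁻¹ * Ytᵀ * R * Yt).trace
        = 2 * (Zᵀ * R * Yt).trace - (Xt * (Zᵀ * R * Z)).trace := sup_form hXtpd Yt
    have hk1 : 2 * (Zᵀ * R * Y₁).trace - (X₁ * (Zᵀ * R * Z)).trace
        ≤ (X₁⁻¹ * Y₁ᵀ * R * Y₁).trace := key_ineq hR hp Y₁ Z
    have hk2 : 2 * (Zᵀ * R * Y₂).trace - (X₂ * (Zᵀ * R * Z)).trace
        ≤ (X₂⁻¹ * Y₂ᵀ * R * Y₂).trace := key_ineq hR hq Y₂ Z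
    have hlin : 2 * (Zᵀ * R * Yt).trace - (Xt * (Zᵀ * R * Z)).trace
        = a * (2 * (Zᵀ * R * Y₁).trace - (X₁ * (Zᵀ * R * Z)).trace)
          + b * (2 * (Zᵀ * R * Y₂).trace - (X₂ * (Zᵀ * R * Z)).trace) := by
      rw [hXtdef, hYtdef]
      rw [Matrix.mul_add, Matrix.add_mul, Matrix.mul_smul, Matrix.mul_smul, Matrix.smul_mul, Matrix.smul_mul,
        trace_add, trace_smul, trace_smul, trace_add, trace_smul, trace_smul]
      simp only [smul_eq_mul]
      ring
    have hQlin : (Q * Xt).trace = a * (Q * X₁).trace + b * (Q * X₂).trace := by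
      rw [hXtdef, Matrix.mul_add, Matrix.mul_smul, Matrix.mul_smul, trace_add, trace_smul, trace_smul]
      simp [smul_eq_mul]
    rw [trace_add, trace_add, trace_add, hsup, hQlin]
    rw [hlin]
    have h1 := mul_le_mul_of_nonneg_left hk1 ha
    have h2 := mul_le_mul_of_nonneg_left hk2 hb
    linarith
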